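/- Let P = (|P|, ≼) be a finite poset and S a chain in P. Then the ordering ≼ can be strengthened to a partial ordering ≼′ on |P| (i.e. x ≼ y implies x ≼′ y) such that |P| − S is a chain under ≼′, while every element of |P| that is ≼-incomparable with at least one element of S remains ≼′-incomparable with at least one element of S. -/

import Mathlib

section StrengtheningAux

variable {α : Type*} [PartialOrder α]

private def auxD (S : Set α) (x : α) : Set α := {t | t ∈ S ∧ t ≤ x}
private def auxU (S : Set α) (x : α) : Set α := {t | t ∈ S ∧ x ≤ t}
private noncomputable def auxf (S : Set α) (x : α) : ℕ := (auxD S x).ncard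
private noncomputable def auxg (S : Set α) (x : α) : ℕ := (auxU S x).ncard

private def auxQ (S : Set α) (T : α → α → Prop) (x y : α) : Prop :=
  auxf S x < auxf S y ∨ (auxf S x = auxf S y ∧ auxg S y < auxg S x) ∨
    (auxf S x = auxf S y ∧ auxg S x = auxg S y ∧ T x y)

private def auxR (S : Set α) (T : α → α → Prop) (x y : α) : Prop :=
  (x ∈ S ∧ y ∈ S ∧ x ≤ y) ∨ (x ∉ S ∧ y ∉ S ∧ auxQ S T x y) ∨
  (x ∈ S ∧ y ∉ S ∧ ∃ z, z ∉ S ∧ x ≤ z ∧ auxQ S T z y) ∨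
  (x ∉ S ∧ y ∈ S ∧ ∃ z, z ∉ S ∧ auxQ S T x z ∧ z ≤ y)

variable {S : Set α} {T : α → α → Prop}

private lemma auxD_nest (hS : IsChain (· ≤ ·) S) (x y : α) :
    auxD S x ⊆ auxD S y ∨ auxD S y ⊆ auxD S x := by
  by_contra h
  push_neg at h
  obtain ⟨h1, h2⟩ := h
  rw [Set.not_subset] at h1 h2
  obtain ⟨a, ha, hay⟩ := h1
  obtain ⟨b, hb, hbx⟩ := h2
  rcases hS.total ha.1 hb.1 with hab | hba
  · exact hay ⟨ha.1, hab.trans hb.2⟩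
  · exact hbx ⟨hb.1, hba.trans ha.2⟩

private lemma auxU_nest (hS : IsChain (· ≤ ·) S) (x y : α) :
    auxU S x ⊆ auxU S y ∨ auxU S y ⊆ auxU S x := by
  by_contra h
  push_neg at h
  obtain ⟨h1, h2⟩ := h
  rw [Set.not_subset] at h1 h2
  obtain ⟨a, ha, hay⟩ := h1
  obtain ⟨b, hb, hbx⟩ := h2
  rcases hS.total ha.1 hb.1 with hab | hba
  · exact hbx ⟨hb.1, ha.2.trans hab⟩
  · exact hay ⟨ha.1, hb.2.trans hba⟩

variable [Finite α]

private lemma auxD_sub (hS : IsChain (· ≤ ·) S) {x y : α} (h : auxf S x ≤ auxf S y) :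
    auxD S x ⊆ auxD S y := by
  rcases auxD_nest hS x y with h' | h'
  · exact h'
  · exact (Set.eq_of_subset_of_ncard_le h' h (Set.toFinite _)).symm.subset

private lemma auxU_sub (hS : IsChain (· ≤ ·) S) {x y : α} (h : auxg S x ≤ auxg S y) :
    auxU S x ⊆ auxU S y := by
  rcases auxU_nest hS x y with h' | h'
  · exact h'
  · exact (Set.eq_of_subset_of_ncard_le h' h (Set.toFinite _)).symm.subset

private lemma auxf_mono {x y : α} (h : x ≤ y) : auxf S x ≤ auxf S y :=
  Set.ncard_le_ncard (fun t ht => ⟨ht.1, ht.2.trans h⟩) (Set.toFinite _)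

private lemma auxg_anti {x y : α} (h : x ≤ y) : auxg S y ≤ auxg S x :=
  Set.ncard_le_ncard (fun t ht => ⟨ht.1, h.trans ht.2⟩) (Set.toFinite _)

private lemma auxQ_refl (hT : IsLinearOrder α T) (x : α) : auxQ S T x x :=
  Or.inr (Or.inr ⟨rfl, rfl, hT.1.1.1.refl x⟩)

private lemma auxQ_trans (hT : IsLinearOrder α T) {x y z : α}
    (h1 : auxQ S T x y) (h2 : auxQ S T y z) : auxQ S T x z := by
  have tt : ∀ {a b c : α}, T a b → T b c → T a c := fun h h' => hT.1.1.2.trans _ _ _ h h'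
  rcases h1 with h1 | ⟨e1, h1⟩ | ⟨e1, e1', t1⟩ <;>
    rcases h2 with h2 | ⟨e2, h2⟩ | ⟨e2, e2', t2⟩
  · exact Or.inl (h1.trans h2)
  · exact Or.inl (e2 ▸ h1)
  · exact Or.inl (e2 ▸ h1)
  · exact Or.inl (e1 ▸ h2)
  · exact Or.inr (Or.inl ⟨e1.trans e2, h2.trans h1⟩)
  · exact Or.inr (Or.inl ⟨e1.trans e2, e2' ▸ h1⟩)
  · exact Or.inl (e1 ▸ h2)
  · exact Or.inr (Or.inl ⟨e1.trans e2, e1' ▸ h2⟩)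
  · exact Or.inr (Or.inr ⟨e1.trans e2, e1'.trans e2', tt t1 t2⟩)

private lemma auxQ_antisymm (hT : IsLinearOrder α T) {x y : α}
    (h1 : auxQ S T x y) (h2 : auxQ S T y x) : x = y := by
  rcases h1 with h1 | ⟨e1, h1⟩ | ⟨e1, e1', t1⟩ <;>
    rcases h2 with h2 | ⟨e2, h2⟩ | ⟨e2, e2', t2⟩ <;>
      first
      | omega
      | exact hT.1.2.antisymm _ _ t1 t2

private lemma auxQ_total (hT : IsLinearOrder α T) (x y : α) :
    auxQ S T x y ∨ auxQ S T y x := by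
  rcases lt_trichotomy (auxf S x) (auxf S y) with h | h | h
  · exact Or.inl (Or.inl h)
  · rcases lt_trichotomy (auxg S x) (auxg S y) with h' | h' | h'
    · exact Or.inr (Or.inr (Or.inl ⟨h.symm, h'⟩))
    · rcases hT.2.total x y with ht | ht
      · exact Or.inl (Or.inr (Or.inr ⟨h, h', ht⟩))
      · exact Or.inr (Or.inr (Or.inr ⟨h.symm, h'.symm, ht⟩))
    · exact Or.inl (Or.inr (Or.inl ⟨h, h'⟩))
  · exact Or.inr (Or.inl h)

private lemma le_auxQ (hTle : ∀ a b : α, a ≤ b → T a b) {x y : α} (h : x ≤ y) :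
    auxQ S T x y := by
  rcases (auxf_mono (S := S) h).lt_or_eq with h1 | h1
  · exact Or.inl h1
  · rcases (auxg_anti (S := S) h).lt_or_eq with h2 | h2
    · exact Or.inr (Or.inl ⟨h1, h2⟩)
    · exact Or.inr (Or.inr ⟨h1, h2.symm, hTle x y h⟩)

private lemma auxQ_f {x y : α} (h : auxQ S T x y) : auxf S x ≤ auxf S y := by
  rcases h with h | ⟨h, -⟩ | ⟨h, -⟩
  · exact h.le
  · exact h.le
  · exact h.le

end StrengtheningAux

/-- Lemma on strengthening a partial order. Let `P` be a finite poset and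
`S` a chain in `P`. Then the order of `P` can be strengthened to a partial order `r` under
which the complement of `S` is a chain, while every element of `P` that is incomparable with
at least one element of `S` under the original order remains incomparable with at least one
element of `S` under `r`. -/
theorem exists_strengthening_chain_complement (α : Type*) [Fintype α] [PartialOrder α]
    (S : Set α) (hS : IsChain (· ≤ ·) S) :
    ∃ r : α → α → Prop, IsPartialOrder α r ∧
      (∀ x y : α, x ≤ y → r x y) ∧
      IsChain r Sᶜ ∧
      ∀ x : α, (∃ s ∈ S, ¬ x ≤ s ∧ ¬ s ≤ x) → ∃ s ∈ S, ¬ r x s ∧ ¬ r s x := by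
  classical
  obtain ⟨T, hT, hTle⟩ := extend_partialOrder ((· ≤ ·) : α → α → Prop)
  have hTle' : ∀ a b : α, a ≤ b → T a b := fun a b h => hTle a b h
  refine ⟨auxR S T, ?_, ?_, ?_, ?_⟩
  · -- partial order
    refine { refl := ?_, trans := ?_, antisymm := ?_ }
    · intro x
      by_cases hx : x ∈ S
      · exact Or.inl ⟨hx, hx, le_refl x⟩
      · exact Or.inr (Or.inl ⟨hx, hx, auxQ_refl hT x⟩)
    · intro x y z h1 h2
      rcases h1 with ⟨hx1, hy1, h1⟩ | ⟨hx1, hy1, h1⟩ | ⟨hx1, hy1, w1, hw1, hxw1, hq1⟩ |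
        ⟨hx1, hy1, w1, hw1, hq1, hwy1⟩ <;>
        rcases h2 with ⟨hy2, hz2, h2⟩ | ⟨hy2, hz2, h2⟩ | ⟨hy2, hz2, w2, hw2, hyw2, hq2⟩ |
          ⟨hy2, hz2, w2, hw2, hq2, hwz2⟩
      · exact Or.inl ⟨hx1, hz2, h1.trans h2⟩
      · exact absurd hy1 hy2
      · exact Or.inr (Or.inr (Or.inl ⟨hx1, hz2, w2, hw2, h1.trans hyw2, hq2⟩))
      · exact absurd hy1 hy2
      · exact absurd hy2 hy1
      · exact Or.inr (Or.inl ⟨hx1, hz2, auxQ_trans hT h1 h2⟩)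
      · exact absurd hy2 hy1
      · exact Or.inr (Or.inr (Or.inr ⟨hx1, hz2, w2, hw2, auxQ_trans hT h1 hq2, hwz2⟩))
      · exact absurd hy2 hy1
      · exact Or.inr (Or.inr (Or.inl ⟨hx1, hz2, w1, hw1, hxw1, auxQ_trans hT hq1 h2⟩))
      · exact absurd hy2 hy1
      · -- S C S : chain argument
        rcases hS.total hx1 hz2 with hxz | hzx
        · exact Or.inl ⟨hx1, hz2, hxz⟩
        · have hww : w2 ≤ w1 := hwz2.trans (hzx.trans hxw1)
          have := auxQ_antisymm hT (auxQ_trans hT hq1 hq2) (le_auxQ hTle' hww)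
          exact Or.inl ⟨hx1, hz2, hxw1.trans (this ▸ hwz2)⟩
      · exact Or.inr (Or.inr (Or.inr ⟨hx1, hz2, w1, hw1, hq1, hwy1.trans h2⟩))
      · exact absurd hy1 hy2
      · -- C S C
        exact Or.inr (Or.inl ⟨hx1, hz2,
          auxQ_trans hT (auxQ_trans hT hq1 (le_auxQ hTle' (hwy1.trans hyw2))) hq2⟩)
      · exact absurd hy1 hy2
    · intro x y h1 h2
      rcases h1 with ⟨hx1, hy1, h1⟩ | ⟨hx1, hy1, h1⟩ | ⟨hx1, hy1, w1, hw1, hxw1, hq1⟩ |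
        ⟨hx1, hy1, w1, hw1, hq1, hwy1⟩ <;>
        rcases h2 with ⟨hy2, hx2, h2⟩ | ⟨hy2, hx2, h2⟩ | ⟨hy2, hx2, w2, hw2, hyw2, hq2⟩ |
          ⟨hy2, hx2, w2, hw2, hq2, hwx2⟩ <;>
        first
        | exact absurd hx1 hx2
        | exact absurd hy1 hy2
        | exact absurd hx2 hx1
        | exact absurd hy2 hy1
        | exact le_antisymm h1 h2
        | exact auxQ_antisymm hT h1 h2
        | skip
      · -- x ∈ S, y ∉ S both directions
        have hww : w1 = w2 :=
          auxQ_antisymm hT (auxQ_trans hT hq1 hq2) (le_auxQ hTle' (hwx2.trans hxw1))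
        have hxw : x = w1 := le_antisymm hxw1 (hww ▸ hwx2)
        exact absurd (hxw ▸ hx1) hw1
      · have hww : w2 = w1 :=
          auxQ_antisymm hT (auxQ_trans hT hq2 hq1) (le_auxQ hTle' (hwy1.trans hyw2))
        have hyw : y = w2 := le_antisymm hyw2 (hww ▸ hwy1)
        exact absurd (hyw ▸ hy1) hw2
  · -- extends ≤
    intro x y h
    by_cases hx : x ∈ S <;> by_cases hy : y ∈ S
    · exact Or.inl ⟨hx, hy, h⟩
    · exact Or.inr (Or.inr (Or.inl ⟨hx, hy, y, hy, h, auxQ_refl hT y⟩))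
    · exact Or.inr (Or.inr (Or.inr ⟨hx, hy, x, hx, auxQ_refl hT x, h⟩))
    · exact Or.inr (Or.inl ⟨hx, hy, le_auxQ hTle' h⟩)
  · -- complement is a chain
    intro x hx y hy _
    rcases auxQ_total (S := S) hT x y with h | h
    · exact Or.inl (Or.inr (Or.inl ⟨hx, hy, h⟩))
    · exact Or.inr (Or.inr (Or.inl ⟨hy, hx, h⟩))
  · -- incomparability preserved
    rintro x ⟨s0, hs0S, hxs0, hs0x⟩
    have hxS : x ∉ S := by
      intro hx
      rcases hS.total hx hs0S with h | h
      · exact hxs0 h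
      · exact hs0x h
    set M : Set α := {t | t ∈ S ∧ ¬ t ≤ x ∧ ¬ x ≤ t} with hM
    have hMne : ((Set.toFinite M).toFinset).Nonempty :=
      ⟨s0, (Set.Finite.mem_toFinset _).2 ⟨hs0S, fun h => hs0x h, fun h => hxs0 h⟩⟩
    obtain ⟨m, hmF, hmin⟩ : ∃ m ∈ (Set.toFinite M).toFinset,
        ∀ t ∈ (Set.toFinite M).toFinset, ¬ t < m := by
      obtain ⟨m, hm⟩ := Finset.exists_minimal hMne
      exact ⟨m, hm.1, fun t ht hlt => hlt.not_ge (hm.2 ht hlt.le)⟩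
    have hm : m ∈ M := (Set.Finite.mem_toFinset _).1 hmF
    refine ⟨m, hm.1, ?_, ?_⟩
    · -- ¬ auxR x m
      rintro (⟨hx', -⟩ | ⟨-, hm', -⟩ | ⟨hx', -⟩ | ⟨-, -, z, hz, hq, hzm⟩)
      · exact hxS hx'
      · exact hm' hm.1
      · exact hxS hx'
      · rcases hq with hq | ⟨hq, hg⟩ | ⟨hq, hg, -⟩
        · -- f x < f z : find smaller incomparable element
          have hns : ¬ auxD S z ⊆ auxD S x := by
            intro h'
            exact absurd (Set.ncard_le_ncard h' (Set.toFinite _)) (not_le.2 hq)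
          rw [Set.not_subset] at hns
          obtain ⟨t, htz, htx⟩ := hns
          have htm : t ≤ m := htz.2.trans hzm
          have htnx : ¬ t ≤ x := fun h' => htx ⟨htz.1, h'⟩
          have hxnt : ¬ x ≤ t := fun h' => hm.2.2 (h'.trans htm)
          have htM : t ∈ (Set.toFinite M).toFinset :=
            (Set.Finite.mem_toFinset _).2 ⟨htz.1, htnx, hxnt⟩
          have htne : t ≠ m := by
            intro h'
            subst h'
            exact hz (le_antisymm hzm htz.2 ▸ hm.1)
          exact hmin t htM (lt_of_le_of_ne htm htne)
        · have : m ∈ auxU S x := auxU_sub hS hg.le ⟨hm.1, hzm⟩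
          exact hm.2.2 this.2
        · have : m ∈ auxU S x := auxU_sub hS hg.ge ⟨hm.1, hzm⟩
          exact hm.2.2 this.2
    · -- ¬ auxR m x
      rintro (⟨-, hx', -⟩ | ⟨hm', -⟩ | ⟨-, -, z, hz, hmz, hq⟩ | ⟨hm', -⟩)
      · exact hxS hx'
      · exact hm' hm.1
      · have : m ∈ auxD S x := auxD_sub hS (auxQ_f hq) ⟨hm.1, hmz⟩
        exact hm.2.1 this.2
      · exact hm' hm.1
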